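/- Given the resistance function r*(x, x') = ℓ(x) − ℓ(x ∩ x') between absorbing states, if ℓ(x') > ℓ(x) then the stochastic potential of x' is strictly less than the stochastic potential of x; and if ℓ(x') = ℓ(x) then they have equal stochastic potential. -/

import Mathlib

open scoped Classical

/-- Given a resistance function `r(x,x') = ℓ(x) − ℓ(x ∩ x')` between absorbing
states (with `cap x y` playing the role of `ℓ(x ∩ y)`: symmetric and at most
`ℓ` of either argument), the stochastic potential `γ` (minimum total
resistance over directed spanning trees toward the root) satisfies: if
`ℓ(x') > ℓ(x)` then `γ(x') < γ(x)`, and if `ℓ(x') = ℓ(x)` then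
`γ(x') = γ(x)`. -/
theorem potential_lt_of_card_gt {A : Type} [Fintype A] [Nonempty A]
    (ℓ : A → ℕ) (cap : A → A → ℕ) (r : A → A → ℕ)
    (hsymm : ∀ x y, cap x y = cap y x)
    (hle : ∀ x y, cap x y ≤ ℓ x)
    (hr : ∀ x y, r x y = ℓ x - cap x y)
    (γ : A → ℕ)
    (hγ : ∀ x : A, γ x =
      sInf { n : ℕ | ∃ f : A → A, f x = x ∧ (∀ y : A, ∃ k : ℕ, f^[k] y = x) ∧
        (∑ y ∈ Finset.univ.filter (fun y : A => y ≠ x), r y (f y)) = n }) :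
    ∀ x x' : A, (ℓ x < ℓ x' → γ x' < γ x) ∧ (ℓ x = ℓ x' → γ x = γ x') := by
  have key : ∀ y z : A, r y z + ℓ z = r z y + ℓ y := by
    intro y z
    have h1 := hle y z
    have h2 := hle z y
    have h3 := hsymm y z
    rw [hr, hr]
    omega
  have main : ∀ x x' : A, γ x' + ℓ x' ≤ γ x + ℓ x := by
    intro x x'
    have hne : { n : ℕ | ∃ f : A → A, f x = x ∧ (∀ y : A, ∃ k : ℕ, f^[k] y = x) ∧
        (∑ y ∈ Finset.univ.filter (fun y : A => y ≠ x), r y (f y)) = n }.Nonempty :=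
      ⟨_, fun _ => x, rfl, fun y => ⟨1, rfl⟩, rfl⟩
    have hmem := Nat.sInf_mem hne
    rw [← hγ x] at hmem
    obtain ⟨f, hfx, hreachall, hsum⟩ := hmem
    have hreach : ∃ k, f^[k] x' = x := hreachall x'
    set k := Nat.find hreach with hk
    have hpk : f^[k] x' = x := Nat.find_spec hreach
    by_cases hkz : k = 0
    · have hxx : x' = x := by simpa [hkz] using hpk
      subst hxx
      exact le_rfl
    -- distinctness of the path x' = p 0, p 1, ..., p k = x
    have hdist : ∀ i j : ℕ, i < j → j ≤ k → f^[i] x' ≠ f^[j] x' := by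
      intro i j hij hjk heq
      have hx : f^[(k - j) + i] x' = x := by
        rw [Function.iterate_add_apply, heq, ← Function.iterate_add_apply]
        have : k - j + j = k := by omega
        rw [this, hpk]
      have hlt : (k - j) + i < Nat.find hreach := by omega
      exact Nat.find_min hreach hlt hx
    -- the reversed tree
    set f' : A → A := fun y =>
      if h : ∃ i, i < k ∧ f^[i + 1] x' = y then f^[Nat.find h] x'
      else if y = x' then x' else f y with hf'
    have hA : f' x' = x' := by
      have hnex : ¬∃ i, i < k ∧ f^[i + 1] x' = x' := by
        rintro ⟨i, hi, heq⟩
        exact hdist 0 (i + 1) (by omega) (by omega) (by simpa using heq.symm)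
      have hstep : f' x' = if h : ∃ i, i < k ∧ f^[i + 1] x' = x' then f^[Nat.find h] x'
          else if x' = x' then x' else f x' := rfl
      rw [hstep, dif_neg hnex, if_pos rfl]
    have hB : ∀ j : ℕ, j < k → f' (f^[j + 1] x') = f^[j] x' := by
      intro j hj
      have hex : ∃ i, i < k ∧ f^[i + 1] x' = f^[j + 1] x' := ⟨j, hj, rfl⟩
      have hfind : Nat.find hex = j := by
        obtain ⟨hlt, heq⟩ := Nat.find_spec hex
        rcases lt_trichotomy (Nat.find hex) j with h | h | h
        · exact absurd heq (hdist _ _ (by omega) (by omega))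
        · exact h
        · exact absurd heq.symm (hdist _ _ (by omega) (by omega))
      have hstep : f' (f^[j + 1] x') = if h : ∃ i, i < k ∧ f^[i + 1] x' = f^[j + 1] x'
          then f^[Nat.find h] x' else if f^[j + 1] x' = x' then x' else f (f^[j + 1] x') := rfl
      rw [hstep, dif_pos hex, hfind]
    have hC : ∀ y : A, (∀ j : ℕ, j ≤ k → f^[j] x' ≠ y) → f' y = f y := by
      intro y hy
      have h1 : ¬∃ i, i < k ∧ f^[i + 1] x' = y := by
        rintro ⟨i, hi, heq⟩
        exact hy (i + 1) (by omega) heq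
      have h2 : y ≠ x' := fun h => hy 0 (by omega) (by simpa using h.symm)
      have hstep : f' y = if h : ∃ i, i < k ∧ f^[i + 1] x' = y then f^[Nat.find h] x'
          else if y = x' then x' else f y := rfl
      rw [hstep, dif_neg h1, if_neg h2]
    -- reachability to x' under f'
    have hD1 : ∀ j : ℕ, j ≤ k → ∃ m, f'^[m] (f^[j] x') = x' := by
      intro j
      induction j with
      | zero => exact fun _ => ⟨0, by simp⟩
      | succ j ih =>
        intro hj
        obtain ⟨m, hm⟩ := ih (by omega)
        exact ⟨m + 1, by rw [Function.iterate_succ_apply, hB j (by omega), hm]⟩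
    have hD : ∀ y : A, ∃ m, f'^[m] y = x' := by
      have H : ∀ m : ℕ, ∀ y : A, f^[m] y = x → ∃ m', f'^[m'] y = x' := by
        intro m
        induction m using Nat.strong_induction_on with
        | _ m ih =>
          intro y hy
          by_cases hcase : ∃ j, j ≤ k ∧ f^[j] x' = y
          · obtain ⟨j, hj, hpj⟩ := hcase
            rw [← hpj]
            exact hD1 j hj
          · push_neg at hcase
            have hyx : y ≠ x := fun h => hcase k le_rfl (h ▸ hpk)
            have hm0 : m ≠ 0 := by
              intro h
              subst h
              simp only [Function.iterate_zero_apply] at hy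
              exact hyx hy
            obtain ⟨m', rfl⟩ : ∃ m', m = m' + 1 := ⟨m - 1, by omega⟩
            have hstep : f^[m'] (f y) = x := by
              rw [← Function.iterate_succ_apply]
              exact hy
            obtain ⟨m'', hm''⟩ := ih m' (by omega) (f y) hstep
            exact ⟨m'' + 1, by rw [Function.iterate_succ_apply, hC y hcase, hm'']⟩
      intro y
      obtain ⟨m, hm⟩ := hreachall y
      exact H m y hm
    -- the path as a finset
    set P : Finset A := (Finset.range (k + 1)).image (fun j => f^[j] x') with hP
    have hx'P : x' ∈ P := by
      simp only [hP, Finset.mem_image, Finset.mem_range]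
      exact ⟨0, by omega, by simp⟩
    have hxP : x ∈ P := by
      simp only [hP, Finset.mem_image, Finset.mem_range]
      exact ⟨k, by omega, hpk⟩
    have hsplit : ∀ (g : A → A) (z : A), z ∈ P →
        ∑ y ∈ Finset.univ.filter (fun y => y ≠ z), r y (g y)
        = ∑ y ∈ P.filter (fun y => y ≠ z), r y (g y)
          + ∑ y ∈ Finset.univ.filter (fun y => y ∉ P), r y (g y) := by
      intro g z hz
      rw [← Finset.sum_filter_add_sum_filter_not
        (Finset.univ.filter (fun y => y ≠ z)) (fun y => y ∈ P)]
      congr 1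
      · apply Finset.sum_congr _ (fun _ _ => rfl)
        ext y
        simp only [Finset.mem_filter, Finset.mem_univ, true_and]
        tauto
      · apply Finset.sum_congr _ (fun _ _ => rfl)
        ext y
        simp only [Finset.mem_filter, Finset.mem_univ, true_and]
        constructor
        · tauto
        · intro h
          exact ⟨fun he => h (he ▸ hz), h⟩
    have hoff : ∑ y ∈ Finset.univ.filter (fun y => y ∉ P), r y (f' y)
        = ∑ y ∈ Finset.univ.filter (fun y => y ∉ P), r y (f y) := by
      apply Finset.sum_congr rfl
      intro y hy
      simp only [Finset.mem_filter, Finset.mem_univ, true_and, hP, Finset.mem_image,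
        Finset.mem_range, not_exists, not_and] at hy
      rw [hC y (fun j hj => hy j (by omega))]
    have hP1 : P.filter (fun y => y ≠ x') = (Finset.range k).image (fun j => f^[j + 1] x') := by
      ext y
      simp only [Finset.mem_filter, hP, Finset.mem_image, Finset.mem_range]
      constructor
      · rintro ⟨⟨j, hj, rfl⟩, hne⟩
        cases j with
        | zero => simp at hne
        | succ j => exact ⟨j, by omega, rfl⟩
      · rintro ⟨j, hj, rfl⟩
        exact ⟨⟨j + 1, by omega, rfl⟩,
          fun h => hdist 0 (j + 1) (by omega) (by omega) (by simpa using h.symm)⟩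
    have hP2 : P.filter (fun y => y ≠ x) = (Finset.range k).image (fun j => f^[j] x') := by
      ext y
      simp only [Finset.mem_filter, hP, Finset.mem_image, Finset.mem_range]
      constructor
      · rintro ⟨⟨j, hj, rfl⟩, hne⟩
        refine ⟨j, ?_, rfl⟩
        rcases Nat.lt_or_ge j k with h | h
        · exact h
        · exact absurd (by rw [show j = k by omega, hpk]) hne
      · rintro ⟨j, hj, rfl⟩
        exact ⟨⟨j, by omega, rfl⟩, fun h => hdist j k hj le_rfl (by rw [h, hpk])⟩
    have hsum1 : ∑ y ∈ P.filter (fun y => y ≠ x'), r y (f' y)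
        = ∑ j ∈ Finset.range k, r (f^[j + 1] x') (f^[j] x') := by
      rw [hP1, Finset.sum_image]
      · exact Finset.sum_congr rfl (fun j hj => by
          rw [hB j (Finset.mem_range.mp hj)])
      · intro a ha b hb hab
        simp only [Finset.mem_coe, Finset.mem_range] at ha hb
        rcases lt_trichotomy a b with h | h | h
        · exact absurd hab (hdist _ _ (by omega) (by omega))
        · exact h
        · exact absurd hab.symm (hdist _ _ (by omega) (by omega))
    have hsum2 : ∑ y ∈ P.filter (fun y => y ≠ x), r y (f y)
        = ∑ j ∈ Finset.range k, r (f^[j] x') (f^[j + 1] x') := by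
      rw [hP2, Finset.sum_image]
      · exact Finset.sum_congr rfl (fun j hj => by
          rw [Function.iterate_succ_apply'])
      · intro a ha b hb hab
        simp only [Finset.mem_coe, Finset.mem_range] at ha hb
        rcases lt_trichotomy a b with h | h | h
        · exact absurd hab (hdist _ _ (by omega) (by omega))
        · exact h
        · exact absurd hab.symm (hdist _ _ (by omega) (by omega))
    have tele : ∀ n : ℕ,
        (∑ j ∈ Finset.range n, r (f^[j + 1] x') (f^[j] x')) + ℓ x'
        = (∑ j ∈ Finset.range n, r (f^[j] x') (f^[j + 1] x')) + ℓ (f^[n] x') := by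
      intro n
      induction n with
      | zero => simp
      | succ n ih =>
        rw [Finset.sum_range_succ, Finset.sum_range_succ]
        have := key (f^[n + 1] x') (f^[n] x')
        omega
    -- put it all together
    have hmem' : (∑ y ∈ Finset.univ.filter (fun y : A => y ≠ x'), r y (f' y)) ∈
        { n : ℕ | ∃ g : A → A, g x' = x' ∧ (∀ y : A, ∃ k : ℕ, g^[k] y = x') ∧
          (∑ y ∈ Finset.univ.filter (fun y : A => y ≠ x'), r y (g y)) = n } :=
      ⟨f', hA, hD, rfl⟩
    have hγ' : γ x' ≤ ∑ y ∈ Finset.univ.filter (fun y : A => y ≠ x'), r y (f' y) := by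
      rw [hγ x']
      exact Nat.sInf_le hmem'
    have heq : (∑ y ∈ Finset.univ.filter (fun y : A => y ≠ x'), r y (f' y)) + ℓ x'
        = γ x + ℓ x := by
      rw [hsplit f' x' hx'P, hoff, hsum1, ← hsum, hsplit f x hxP, hsum2]
      have ht := tele k
      rw [hpk] at ht
      omega
    omega
  intro x x'
  have h1 := main x x'
  have h2 := main x' x
  constructor
  · intro h
    omega
  · intro h
    omega
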